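/- Let (X, d) be a metric space and let u_n : X → ℝ (n ≥ 0) be bounded continuous functions. Let c > 0, 0 < β < 1, A > 1 with Aβ < 1, d₀ > 1 and γ > 0 be constants such that ‖u_n‖_∞ ≤ c·Aⁿ for all n ≥ 0, and such that for every κ > 1 there exists c_κ > 0 with m_X(u_n, r) ≤ c_κ · d₀ⁿ · r^{γκ^{−n}} for all n ≥ 0 and all 0 < r ≤ 1. Then the series u := Σ_{n≥0} βⁿ u_n converges uniformly on X, and for every q > 0 there exists C_q > 0 such that m_X(u, r) ≤ C_q · (1 + |log r|)^{−q} for all 0 < r ≤ 1. -/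

import Mathlib

/-- Polynomial growth is beaten by exponential growth: `x ^ s ≤ M * exp (a * x)` on `[1, ∞)`. -/
lemma stmt7_aux_poly_exp (s a : ℝ) (hs : 0 ≤ s) (ha : 0 < a) :
    ∃ M : ℝ, 0 < M ∧ ∀ x : ℝ, 1 ≤ x → x ^ s ≤ M * Real.exp (a * x) := by
  refine ⟨(Nat.factorial (Nat.ceil s) : ℝ) / a ^ (Nat.ceil s), by positivity, fun x hx => ?_⟩
  set m := Nat.ceil s with hm
  have hx0 : (0:ℝ) < x := lt_of_lt_of_le one_pos hx
  have h1 : x ^ s ≤ x ^ (m : ℝ) := Real.rpow_le_rpow_of_exponent_le hx (Nat.le_ceil s)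
  rw [Real.rpow_natCast] at h1
  have h2 : (a * x) ^ m / (Nat.factorial m : ℝ) ≤ Real.exp (a * x) :=
    Real.pow_div_factorial_le_exp (x := a * x) (by positivity) m
  have hfac : (0:ℝ) < (Nat.factorial m : ℝ) := by positivity
  have ham : (0:ℝ) < a ^ m := by positivity
  have h3 : a ^ m * x ^ m ≤ (Nat.factorial m : ℝ) * Real.exp (a * x) := by
    have := (div_le_iff₀ hfac).mp h2
    calc a ^ m * x ^ m = (a * x) ^ m := (mul_pow a x m).symm
      _ ≤ Real.exp (a * x) * (Nat.factorial m : ℝ) := this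
      _ = (Nat.factorial m : ℝ) * Real.exp (a * x) := by ring
  calc x ^ s ≤ x ^ m := h1
    _ ≤ (Nat.factorial m : ℝ) / a ^ m * Real.exp (a * x) := by
        rw [div_mul_eq_mul_div, le_div_iff₀ ham]; nlinarith

set_option maxHeartbeats 1000000 in
/-- analytic core of Lemma 2.12 of the paper. Let `u_n : X → ℝ` be bounded
continuous functions with `‖u_n‖_∞ ≤ c Aⁿ` and, for every `κ > 1`,
`m_X(u_n, r) ≤ c_κ d₀ⁿ r^{γ κ^{-n}}`. If `0 < β < 1` and `Aβ < 1`, then `u = Σ βⁿ u_n`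
converges uniformly and, for every `q > 0`, `m_X(u, r) ≤ C_q (1 + |log r|)^{-q}`. -/
theorem stmt_7 {X : Type*} [MetricSpace X] (u : ℕ → X → ℝ)
    (hcont : ∀ n, Continuous (u n))
    (c β A d₀ γ : ℝ) (hc : 0 < c)
    (hβ0 : 0 < β) (hβ1 : β < 1) (hA : 1 < A) (hAβ : A * β < 1)
    (hd₀ : 1 < d₀) (hγ : 0 < γ)
    (hbound : ∀ n : ℕ, ∀ x : X, |u n x| ≤ c * A ^ n)
    (hmod : ∀ κ : ℝ, 1 < κ → ∃ cκ : ℝ, 0 < cκ ∧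
      ∀ n : ℕ, ∀ r : ℝ, 0 < r → r ≤ 1 → ∀ x y : X, dist x y ≤ r →
        |u n x - u n y| ≤ cκ * d₀ ^ n * r ^ (γ / κ ^ n)) :
    TendstoUniformly (fun N : ℕ => fun x : X => ∑ n ∈ Finset.range N, β ^ n * u n x)
      (fun x : X => ∑' n : ℕ, β ^ n * u n x) Filter.atTop ∧
    ∀ q : ℝ, 0 < q → ∃ Cq : ℝ, 0 < Cq ∧
      ∀ r : ℝ, 0 < r → r ≤ 1 → ∀ x y : X, dist x y ≤ r →
        |(∑' n : ℕ, β ^ n * u n x) - (∑' n : ℕ, β ^ n * u n y)| ≤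
          Cq * (1 + |Real.log r|) ^ (-q) := by
  have hAβ0 : 0 < A * β := by positivity
  have h1mAβ : 0 < 1 - A * β := by linarith
  have hub : ∀ n : ℕ, ∀ x : X, ‖β ^ n * u n x‖ ≤ c * (A * β) ^ n := by
    intro n x
    rw [Real.norm_eq_abs, abs_mul, abs_pow, abs_of_pos hβ0]
    calc β ^ n * |u n x| ≤ β ^ n * (c * A ^ n) := by
          exact mul_le_mul_of_nonneg_left (hbound n x) (by positivity)
      _ = c * (A * β) ^ n := by rw [mul_pow]; ring
  have hsumc : Summable (fun n : ℕ => c * (A * β) ^ n) :=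
    (summable_geometric_of_lt_one hAβ0.le hAβ).mul_left c
  have hsum_pt : ∀ x : X, Summable fun n : ℕ => β ^ n * u n x := fun x =>
    Summable.of_norm_bounded hsumc (fun n => hub n x)
  refine ⟨tendstoUniformly_tsum_nat hsumc hub, ?_⟩
  intro q hq
  set L := -Real.log (A * β) with hL_def
  have hL : 0 < L := by
    have := Real.log_neg hAβ0 hAβ
    rw [hL_def]; linarith
  set ℓ := L / (4 * q) with hℓ_def
  have hℓ : 0 < ℓ := by positivity
  set κ := Real.exp ℓ with hκ_def
  have hκ1 : (1:ℝ) < κ := by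
    rw [hκ_def, show (1:ℝ) = Real.exp 0 from Real.exp_zero.symm]
    exact Real.exp_lt_exp.mpr hℓ
  have hκ0 : (0:ℝ) < κ := lt_trans one_pos hκ1
  obtain ⟨cκ, hcκ, hmκ⟩ := hmod κ hκ1
  set D := max 1 (β * d₀) with hD_def
  have hD1 : (1:ℝ) ≤ D := le_max_left _ _
  have hD0 : (0:ℝ) < D := lt_of_lt_of_le one_pos hD1
  have hlogD : 0 ≤ Real.log D := Real.log_nonneg hD1
  set p := Real.log D / (2 * ℓ) with hp_def
  have hp0 : 0 ≤ p := by positivity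
  set a := γ / κ with ha_def
  have ha : 0 < a := by positivity
  obtain ⟨M, hM, hMle⟩ := stmt7_aux_poly_exp (2 * (1 + p + q)) a (by positivity) ha
  set C₁ := 1 / (2 * ℓ) + 1 with hC₁_def
  have hC₁ : 0 < C₁ := by positivity
  set C₂ := cκ * C₁ * D * Real.exp a with hC₂_def
  have hC₂ : 0 < C₂ := by positivity
  set Ct := 2 * c / (1 - A * β) with hCt_def
  have hCt : 0 < Ct := div_pos (by linarith) h1mAβ
  refine ⟨C₂ * M + Ct, by positivity, ?_⟩
  intro r hr0 hr1 x y hxy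
  set t := 1 + |Real.log r| with ht_def
  have hlogr0 : Real.log r ≤ 0 := Real.log_nonpos hr0.le hr1
  have hlogr_eq : Real.log r = 1 - t := by rw [ht_def, abs_of_nonpos hlogr0]; ring
  have ht1 : (1:ℝ) ≤ t := by rw [ht_def]; linarith [abs_nonneg (Real.log r)]
  have ht0 : (0:ℝ) < t := lt_of_lt_of_le one_pos ht1
  have hlt0 : 0 ≤ Real.log t := Real.log_nonneg ht1
  set N := Nat.ceil (Real.log t / (2 * ℓ)) with hN_def
  have hN1 : Real.log t / (2 * ℓ) ≤ (N:ℝ) := Nat.le_ceil _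
  have hN2 : (N:ℝ) ≤ Real.log t / (2 * ℓ) + 1 := (Nat.ceil_lt_add_one (by positivity)).le
  set st := t ^ ((1:ℝ)/2) with hst_def
  have hst_eq : st = Real.exp (Real.log t * (1/2)) := Real.rpow_def_of_pos ht0 _
  have hst1 : (1:ℝ) ≤ st := by rw [hst_eq]; exact Real.one_le_exp (by positivity)
  have hst0 : (0:ℝ) < st := lt_of_lt_of_le one_pos hst1
  have hstsq : st * st = t := by
    rw [hst_def, ← Real.rpow_add ht0]; norm_num
  have hκN_eq : κ ^ N = Real.exp ((N:ℝ) * ℓ) := by rw [hκ_def, ← Real.exp_nat_mul]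
  have hκN0 : (0:ℝ) < κ ^ N := by positivity
  have hdiv : Real.log t / (2 * ℓ) * (2 * ℓ) = Real.log t := div_mul_cancel₀ _ (by positivity)
  have hκN_ub : κ ^ N ≤ κ * st := by
    rw [hκN_eq, hκ_def, hst_eq, ← Real.exp_add]
    apply Real.exp_le_exp.mpr
    have h1 := mul_le_mul_of_nonneg_right hN2 hℓ.le
    have h2 : Real.log t / (2 * ℓ) * ℓ = Real.log t / 2 := by field_simp
    linarith
  have hAβN : (A * β) ^ N ≤ t ^ (-(2 * q)) := by
    have e1 : (A * β) ^ N = Real.exp ((N:ℝ) * Real.log (A * β)) := by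
      rw [Real.exp_nat_mul, Real.exp_log hAβ0]
    have e2 : t ^ (-(2 * q)) = Real.exp (Real.log t * (-(2 * q))) := Real.rpow_def_of_pos ht0 _
    rw [e1, e2]
    apply Real.exp_le_exp.mpr
    have hlogAβ : Real.log (A * β) = -(4 * q * ℓ) := by
      rw [hℓ_def, hL_def]; field_simp
    rw [hlogAβ]
    have hdiv2 : Real.log t / (2 * ℓ) * (4 * q * ℓ) = 2 * q * Real.log t := by
      field_simp; ring
    have h1 := mul_le_mul_of_nonneg_right hN1 (by positivity : (0:ℝ) ≤ 4 * q * ℓ)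
    linarith
  have hsx := hsum_pt x
  have hsy := hsum_pt y
  set f : ℕ → ℝ := fun n => β ^ n * u n x - β ^ n * u n y with hf_def
  have hf : Summable f := hsx.sub hsy
  have hfb : ∀ n : ℕ, |f n| ≤ 2 * c * (A * β) ^ n := by
    intro n
    have e : f n = β ^ n * (u n x - u n y) := by rw [hf_def]; ring
    rw [e, abs_mul, abs_pow, abs_of_pos hβ0]
    have habs2 : |u n x - u n y| ≤ 2 * (c * A ^ n) := by
      have := abs_sub (u n x) (u n y)
      have h1 := hbound n x
      have h2 := hbound n y
      linarith [abs_sub_abs_le_abs_sub (u n x) (u n y),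
        (abs_sub (u n x) (u n y) : |u n x - u n y| ≤ |u n x| + |u n y|)]
    calc β ^ n * |u n x - u n y| ≤ β ^ n * (2 * (c * A ^ n)) :=
          mul_le_mul_of_nonneg_left habs2 (by positivity)
      _ = 2 * c * (A * β) ^ n := by rw [mul_pow]; ring
  have hfshift : Summable fun n : ℕ => f (n + N) := (summable_nat_add_iff N).mpr hf
  have hsplit : ∑' n : ℕ, f n = (∑ n ∈ Finset.range N, f n) + ∑' n : ℕ, f (n + N) :=
    (Summable.sum_add_tsum_nat_add' hfshift).symm
  have hdiff : (∑' n : ℕ, β ^ n * u n x) - (∑' n : ℕ, β ^ n * u n y) = ∑' n : ℕ, f n :=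
    (Summable.tsum_sub hsx hsy).symm
  have htail : |∑' n : ℕ, f (n + N)| ≤ Ct * t ^ (-q) := by
    have hgeo : HasSum (fun n : ℕ => 2 * c * (A * β) ^ N * (A * β) ^ n)
        (2 * c * (A * β) ^ N * (1 - A * β)⁻¹) :=
      (hasSum_geometric_of_lt_one hAβ0.le hAβ).mul_left _
    have hb : ∀ n : ℕ, ‖f (n + N)‖ ≤ 2 * c * (A * β) ^ N * (A * β) ^ n := by
      intro n
      rw [Real.norm_eq_abs]
      calc |f (n + N)| ≤ 2 * c * (A * β) ^ (n + N) := hfb _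
        _ = 2 * c * (A * β) ^ N * (A * β) ^ n := by rw [pow_add]; ring
    have hts := tsum_of_norm_bounded hgeo hb
    rw [Real.norm_eq_abs] at hts
    refine hts.trans ?_
    have htq : t ^ (-(2 * q)) ≤ t ^ (-q) :=
      Real.rpow_le_rpow_of_exponent_le ht1 (by linarith)
    have h5 : (A * β) ^ N ≤ t ^ (-q) := hAβN.trans htq
    calc 2 * c * (A * β) ^ N * (1 - A * β)⁻¹ = (2 * c / (1 - A * β)) * (A * β) ^ N := by ring
      _ ≤ (2 * c / (1 - A * β)) * t ^ (-q) := mul_le_mul_of_nonneg_left h5 hCt.le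
      _ = Ct * t ^ (-q) := by rw [hCt_def]
  have hhead_term : ∀ n ∈ Finset.range N, |f n| ≤ cκ * D ^ N * r ^ (γ / κ ^ N) := by
    intro n hn
    have hnN : n ≤ N := le_of_lt (Finset.mem_range.mp hn)
    have e : f n = β ^ n * (u n x - u n y) := by rw [hf_def]; ring
    rw [e, abs_mul, abs_pow, abs_of_pos hβ0]
    have h1 : |u n x - u n y| ≤ cκ * d₀ ^ n * r ^ (γ / κ ^ n) := hmκ n r hr0 hr1 x y hxy
    have hκpow : κ ^ n ≤ κ ^ N := pow_le_pow_right₀ hκ1.le hnN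
    have hκn0 : (0:ℝ) < κ ^ n := by positivity
    have hexp : γ / κ ^ N ≤ γ / κ ^ n := by
      rw [div_le_div_iff₀ hκN0 hκn0]
      exact mul_le_mul_of_nonneg_left hκpow hγ.le
    have hr2 : r ^ (γ / κ ^ n) ≤ r ^ (γ / κ ^ N) :=
      Real.rpow_le_rpow_of_exponent_ge hr0 hr1 hexp
    have hβd : β ^ n * d₀ ^ n ≤ D ^ N := by
      calc β ^ n * d₀ ^ n = (β * d₀) ^ n := (mul_pow _ _ _).symm
        _ ≤ D ^ n := pow_le_pow_left₀ (by positivity) (le_max_right _ _) n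
        _ ≤ D ^ N := pow_le_pow_right₀ hD1 hnN
    calc β ^ n * |u n x - u n y| ≤ β ^ n * (cκ * d₀ ^ n * r ^ (γ / κ ^ n)) :=
          mul_le_mul_of_nonneg_left h1 (by positivity)
      _ = cκ * (β ^ n * d₀ ^ n) * r ^ (γ / κ ^ n) := by ring
      _ ≤ cκ * D ^ N * r ^ (γ / κ ^ n) := by
          apply mul_le_mul_of_nonneg_right _ (Real.rpow_pos_of_pos hr0 _).le
          exact mul_le_mul_of_nonneg_left hβd hcκ.le
      _ ≤ cκ * D ^ N * r ^ (γ / κ ^ N) := by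
          apply mul_le_mul_of_nonneg_left hr2 (by positivity)
  have hhead : |∑ n ∈ Finset.range N, f n| ≤ (N:ℝ) * (cκ * D ^ N * r ^ (γ / κ ^ N)) := by
    calc |∑ n ∈ Finset.range N, f n| ≤ ∑ n ∈ Finset.range N, |f n| :=
          Finset.abs_sum_le_sum_abs _ _
      _ ≤ ∑ _n ∈ Finset.range N, cκ * D ^ N * r ^ (γ / κ ^ N) :=
          Finset.sum_le_sum hhead_term
      _ = (N:ℝ) * (cκ * D ^ N * r ^ (γ / κ ^ N)) := by
          rw [Finset.sum_const, Finset.card_range, nsmul_eq_mul]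
  have hNle : (N:ℝ) ≤ C₁ * t := by
    have hlt_le : Real.log t ≤ t := (Real.log_le_sub_one_of_pos ht0).trans (by linarith)
    have hmono : Real.log t / (2 * ℓ) ≤ t / (2 * ℓ) := by gcongr
    calc (N:ℝ) ≤ Real.log t / (2 * ℓ) + 1 := hN2
      _ ≤ t / (2 * ℓ) + t := by linarith
      _ = C₁ * t := by rw [hC₁_def]; ring
  have hDN : D ^ N ≤ D * t ^ p := by
    have e1 : D ^ N = Real.exp ((N:ℝ) * Real.log D) := by
      rw [Real.exp_nat_mul, Real.exp_log hD0]
    have e2 : t ^ p = Real.exp (Real.log t * p) := Real.rpow_def_of_pos ht0 _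
    have e3 : D * t ^ p = Real.exp (Real.log D + Real.log t * p) := by
      rw [Real.exp_add, ← e2, Real.exp_log hD0]
    rw [e1, e3]
    apply Real.exp_le_exp.mpr
    have hpe : Real.log t / (2 * ℓ) * Real.log D = Real.log t * p := by rw [hp_def]; ring
    have h1 := mul_le_mul_of_nonneg_right hN2 hlogD
    linarith
  have hrN : r ^ (γ / κ ^ N) ≤ Real.exp a * Real.exp (-(a * st)) := by
    have e1 : r ^ (γ / κ ^ N) = Real.exp (Real.log r * (γ / κ ^ N)) := Real.rpow_def_of_pos hr0 _
    rw [e1, ← Real.exp_add]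
    apply Real.exp_le_exp.mpr
    rw [hlogr_eq]
    have h1t : 1 - t ≤ 0 := by linarith
    have hκst : (0:ℝ) < κ * st := by positivity
    have hmono : γ / (κ * st) ≤ γ / κ ^ N := by
      rw [div_le_div_iff₀ hκst hκN0]
      exact mul_le_mul_of_nonneg_left hκN_ub hγ.le
    have step1 : (1 - t) * (γ / κ ^ N) ≤ (1 - t) * (γ / (κ * st)) := by
      have hP := mul_nonneg (by linarith : (0:ℝ) ≤ t - 1)
        (by linarith : (0:ℝ) ≤ γ / κ ^ N - γ / (κ * st))
      linarith [hP]
    have step2 : (1 - t) * (γ / (κ * st)) ≤ a + -(a * st) := by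
      have ea : a + -(a * st) = γ * (1 - st) / κ := by rw [ha_def]; ring
      have eb : (1 - t) * (γ / (κ * st)) = (1 - t) * γ / (κ * st) := by ring
      rw [ea, eb, div_le_div_iff₀ hκst hκ0]
      have hw := mul_nonneg (mul_nonneg hγ.le hκ0.le) (by linarith : (0:ℝ) ≤ st - 1)
      have hstsq' : γ * κ * (st * st) = γ * κ * t := by rw [hstsq]
      linarith [hw, hstsq']
    linarith
  have hhead2 : (N:ℝ) * (cκ * D ^ N * r ^ (γ / κ ^ N)) ≤ C₂ * M * t ^ (-q) := by
    have b1 : (N:ℝ) * (cκ * D ^ N * r ^ (γ / κ ^ N)) ≤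
        (C₁ * t) * (cκ * (D * t ^ p) * (Real.exp a * Real.exp (-(a * st)))) := by
      have hx1 : (0:ℝ) ≤ (N:ℝ) := Nat.cast_nonneg N
      have hx2 : (0:ℝ) ≤ r ^ (γ / κ ^ N) := (Real.rpow_pos_of_pos hr0 _).le
      have hx3 : (0:ℝ) ≤ D ^ N := by positivity
      have i1 : cκ * D ^ N * r ^ (γ / κ ^ N) ≤
          cκ * (D * t ^ p) * (Real.exp a * Real.exp (-(a * st))) := by
        have i2 : cκ * D ^ N ≤ cκ * (D * t ^ p) := mul_le_mul_of_nonneg_left hDN hcκ.le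
        exact mul_le_mul i2 hrN hx2 (by positivity)
      calc (N:ℝ) * (cκ * D ^ N * r ^ (γ / κ ^ N))
          ≤ (N:ℝ) * (cκ * (D * t ^ p) * (Real.exp a * Real.exp (-(a * st)))) :=
            mul_le_mul_of_nonneg_left i1 hx1
        _ ≤ (C₁ * t) * (cκ * (D * t ^ p) * (Real.exp a * Real.exp (-(a * st)))) :=
            mul_le_mul_of_nonneg_right hNle (by positivity)
    have b2 : (C₁ * t) * (cκ * (D * t ^ p) * (Real.exp a * Real.exp (-(a * st)))) =
        C₂ * (t * t ^ p * Real.exp (-(a * st))) := by rw [hC₂_def]; ring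
    have b3 : t * t ^ p * Real.exp (-(a * st)) ≤ M * t ^ (-q) := by
      have key := hMle st hst1
      have est : st ^ (2 * (1 + p + q)) = t ^ (1 + p + q) := by
        rw [hst_def, ← Real.rpow_mul ht0.le]
        congr 1
        ring
      rw [est] at key
      have eA : t ^ ((1:ℝ) + p) = t * t ^ p := by
        rw [Real.rpow_add ht0, Real.rpow_one]
      have eB : t ^ ((1:ℝ) + p) = t ^ (1 + p + q) * t ^ (-q) := by
        rw [← Real.rpow_add ht0]; ring_nf
      have hexppos : (0:ℝ) < Real.exp (-(a * st)) := Real.exp_pos _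
      calc t * t ^ p * Real.exp (-(a * st))
          = t ^ (1 + p + q) * Real.exp (-(a * st)) * t ^ (-q) := by
            rw [← eA, eB]; ring
        _ ≤ (M * Real.exp (a * st)) * Real.exp (-(a * st)) * t ^ (-q) := by
            apply mul_le_mul_of_nonneg_right
              (mul_le_mul_of_nonneg_right key hexppos.le) (Real.rpow_nonneg ht0.le _)
        _ = M * t ^ (-q) := by
            rw [mul_assoc M, ← Real.exp_add]
            simp
    calc (N:ℝ) * (cκ * D ^ N * r ^ (γ / κ ^ N))
        ≤ (C₁ * t) * (cκ * (D * t ^ p) * (Real.exp a * Real.exp (-(a * st)))) := b1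
      _ = C₂ * (t * t ^ p * Real.exp (-(a * st))) := b2
      _ ≤ C₂ * (M * t ^ (-q)) := mul_le_mul_of_nonneg_left b3 hC₂.le
      _ = C₂ * M * t ^ (-q) := by ring
  rw [hdiff, hsplit]
  calc |(∑ n ∈ Finset.range N, f n) + ∑' n : ℕ, f (n + N)|
      ≤ |∑ n ∈ Finset.range N, f n| + |∑' n : ℕ, f (n + N)| := abs_add_le _ _
    _ ≤ (N:ℝ) * (cκ * D ^ N * r ^ (γ / κ ^ N)) + Ct * t ^ (-q) := add_le_add hhead htail
    _ ≤ C₂ * M * t ^ (-q) + Ct * t ^ (-q) := add_le_add_left hhead2 _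
    _ = (C₂ * M + Ct) * t ^ (-q) := by ring
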